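/- If T is a tree on at least 2 vertices and ℓ ≥ 1, then the ℓ-leaky forcing number of T equals the number of vertices of T having degree at most ℓ. -/

import Mathlib

open SimpleGraph

namespace LF

variable {V : Type*}

/-- Vertices eventually forced blue, starting from `S`, with leak set `L`:
a blue vertex not in `L` whose every neighbor other than `w` is blue forces `w`. -/
inductive Forced (G : SimpleGraph V) (L S : Set V) : V → Prop
  | init (v : V) (hv : v ∈ S) : Forced G L S v
  | force (b w : V) (hb : Forced G L S b) (hbL : b ∉ L) (hadj : G.Adj b w)
      (hall : ∀ u, G.Adj b u → u ≠ w → Forced G L S u) : Forced G L S w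

/-- `S` is an ℓ-leaky forcing set of `G`. -/
def IsLeakyForcingSet (G : SimpleGraph V) (ℓ : ℕ) (S : Set V) : Prop :=
  ∀ L : Set V, L.ncard ≤ ℓ → ∀ v, Forced G L S v

/-- The ℓ-leaky forcing number `Z_{(ℓ)}(G)`. -/
noncomputable def leakyForcingNumber (G : SimpleGraph V) [Fintype V] (ℓ : ℕ) : ℕ :=
  sInf {k | ∃ S : Finset V, S.card = k ∧ IsLeakyForcingSet G ℓ ↑S}

/-- An ℓ-leaky fort: a nonempty set `F` such that at most ℓ vertices outside `F`
have exactly one neighbor in `F`. -/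
def IsLeakyFort (G : SimpleGraph V) (ℓ : ℕ) (F : Set V) : Prop :=
  F.Nonempty ∧ {v | v ∉ F ∧ ∃! u, u ∈ F ∧ G.Adj v u}.ncard ≤ ℓ

/-- The path graph on `n` vertices. -/
def pathGraph (n : ℕ) : SimpleGraph (Fin n) :=
  SimpleGraph.fromRel (fun i j => i.val + 1 = j.val)

/-- The cycle graph on `n` vertices. -/
def cycleGraph (n : ℕ) : SimpleGraph (Fin n) :=
  SimpleGraph.fromRel (fun i j => (i.val + 1) % n = j.val)

/-- The star graph on `n` vertices, with center `0`. -/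
def starGraph (n : ℕ) : SimpleGraph (Fin n) :=
  SimpleGraph.fromRel (fun i _ => i.val = 0)

/-- The generalized Petersen graph `P(n,k)`: `Sum.inl i` is the inner vertex `x_{i+1}`,
`Sum.inr i` is the outer vertex `y_{i+1}` (0-indexed). -/
def petersen (n k : ℕ) : SimpleGraph (Fin n ⊕ Fin n) :=
  SimpleGraph.fromRel (fun a b =>
    match a, b with
    | Sum.inr i, Sum.inr j => (i.val + 1) % n = j.val
    | Sum.inl i, Sum.inr j => i = j
    | Sum.inl i, Sum.inl j => (i.val + k) % n = j.val
    | _, _ => False)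

end LF
section TreeLemmas

open SimpleGraph Walk

variable {V : Type*} {G : SimpleGraph V}

private lemma isPath_concat' {u v w : V} {p : G.Walk u v} (hp : p.IsPath) (h : G.Adj v w)
    (hw : w ∉ p.support) : (p.concat h).IsPath := by
  rw [← Walk.isPath_reverse_iff, Walk.reverse_concat]
  exact hp.reverse.cons (by simpa using hw)

private lemma adj_dist_cases (hT : G.IsTree) {a b : V} (h : G.Adj a b) (r : V) :
    G.dist r a = G.dist r b + 1 ∨ G.dist r b = G.dist r a + 1 := by
  classical
  have hc := hT.isConnected
  have hab : G.dist a b = 1 := dist_eq_one_iff_adj.mpr h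
  have hba : G.dist b a = 1 := by rw [dist_comm] at hab; exact hab
  have t1 : G.dist r a ≤ G.dist r b + G.dist b a := hc.dist_triangle
  have t2 : G.dist r b ≤ G.dist r a + G.dist a b := hc.dist_triangle
  have hne : G.dist r a ≠ G.dist r b := by
    intro he
    obtain ⟨p, hp, hpl⟩ := hc.exists_path_of_dist r a
    obtain ⟨q, hq, hql⟩ := hc.exists_path_of_dist r b
    have ha : a ∉ q.support := by
      intro ha
      have hspec := q.take_spec ha
      have hlen : (q.takeUntil a ha).length + (q.dropUntil a ha).length = q.length := by
        rw [← Walk.length_append, hspec]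
      have l1 : G.dist r a ≤ (q.takeUntil a ha).length := G.dist_le _
      have l2 : G.dist a b ≤ (q.dropUntil a ha).length := G.dist_le _
      omega
    have hr : (q.concat h.symm).IsPath := isPath_concat' hq h.symm ha
    have heq := (hT.existsUnique_path r a).unique hp hr
    have hl2 : p.length = (q.concat h.symm).length := by rw [heq]
    rw [Walk.length_concat] at hl2
    omega
  omega

private lemma parent_unique (hT : G.IsTree) {x y₁ y₂ : V} (r : V)
    (h₁ : G.Adj x y₁) (h₂ : G.Adj x y₂)
    (d₁ : G.dist r y₁ + 1 = G.dist r x) (d₂ : G.dist r y₂ + 1 = G.dist r x) :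
    y₁ = y₂ := by
  classical
  have hc := hT.isConnected
  obtain ⟨p₁, hp₁, hl₁⟩ := hc.exists_path_of_dist r y₁
  obtain ⟨p₂, hp₂, hl₂⟩ := hc.exists_path_of_dist r y₂
  have hx₁ : x ∉ p₁.support := by
    intro hx
    have h3 := Walk.length_takeUntil_le p₁ hx
    have h4 : G.dist r x ≤ (p₁.takeUntil x hx).length := G.dist_le _
    omega
  have hx₂ : x ∉ p₂.support := by
    intro hx
    have h3 := Walk.length_takeUntil_le p₂ hx
    have h4 : G.dist r x ≤ (p₂.takeUntil x hx).length := G.dist_le _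
    omega
  have hq₁ : (p₁.concat h₁.symm).IsPath := isPath_concat' hp₁ h₁.symm hx₁
  have hq₂ : (p₂.concat h₂.symm).IsPath := isPath_concat' hp₂ h₂.symm hx₂
  have heq := (hT.existsUnique_path r x).unique hq₁ hq₂
  have hrev : (p₁.concat h₁.symm).reverse = (p₂.concat h₂.symm).reverse := by rw [heq]
  rw [Walk.reverse_concat, Walk.reverse_concat] at hrev
  have := congrArg (fun w => w.getVert 1) hrev
  simpa [Walk.getVert_cons] using this

private lemma exists_parent (hT : G.IsTree) {r x : V} {n : ℕ} (h : G.dist r x = n + 1) :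
    ∃ y, G.Adj x y ∧ G.dist r y = n := by
  have hc := hT.isConnected
  obtain ⟨p, hp, hl⟩ := hc.exists_path_of_dist r x
  have hne : x ≠ r := by
    intro he; subst he; rw [SimpleGraph.dist_self] at h; omega
  obtain ⟨y, hadj, q, hq⟩ := Walk.exists_eq_cons_of_ne hne p.reverse
  have hlr : p.reverse.length = n + 1 := by rw [Walk.length_reverse]; omega
  rw [hq] at hlr
  rw [Walk.length_cons] at hlr
  refine ⟨y, hadj, ?_⟩
  have h1 : G.dist r y ≤ q.reverse.length := G.dist_le q.reverse
  rw [Walk.length_reverse] at h1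
  have hyx : G.dist y x = 1 := dist_eq_one_iff_adj.mpr hadj.symm
  have h2 : G.dist r x ≤ G.dist r y + G.dist y x := hc.dist_triangle
  omega

private lemma branch_succ (hT : G.IsTree) {u v x y : V} (huv : G.Adj u v) (hxy : G.Adj x y)
    (hx : G.dist u x = G.dist v x + 1) (hy : G.dist u y = G.dist u x + 1) :
    G.dist u y = G.dist v y + 1 := by
  have hc := hT.isConnected
  have hxy1 : G.dist x y = 1 := dist_eq_one_iff_adj.mpr hxy
  have huv1 : G.dist u v = 1 := dist_eq_one_iff_adj.mpr huv
  have h1 : G.dist v y ≤ G.dist v x + G.dist x y := hc.dist_triangle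
  have h2 : G.dist u y ≤ G.dist u v + G.dist v y := hc.dist_triangle
  omega

private lemma branch_forced [Fintype V] [DecidableRel G.Adj] (hT : G.IsTree) {ℓ : ℕ}
    (hℓ : 1 ≤ ℓ) {S L : Set V} (hS : ∀ w, G.degree w ≤ ℓ → w ∈ S)
    {u v : V} (huv : G.Adj u v)
    (hfree : ∀ z, G.dist u z = G.dist v z + 1 → z ∉ L) :
    ∀ x, G.dist u x = G.dist v x + 1 → LF.Forced G L S x := by
  have hc := hT.isConnected
  suffices key : ∀ n x, G.dist u x = G.dist v x + 1 → Fintype.card V ≤ G.dist u x + n →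
      LF.Forced G L S x by
    intro x hx; exact key (Fintype.card V) x hx (by omega)
  intro n
  induction n with
  | zero =>
    intro x hx hcard
    exfalso
    obtain ⟨p, hp, hl⟩ := hc.exists_path_of_dist u x
    have := hp.length_lt
    omega
  | succ n ih =>
    intro x hx hcard
    by_cases hdeg : G.degree x ≤ ℓ
    · exact LF.Forced.init x (hS x hdeg)
    push_neg at hdeg
    obtain ⟨pz, hpz, hpd⟩ := exists_parent hT hx
    have hcard2 : 1 < (G.neighborFinset x).card := by
      rw [G.card_neighborFinset_eq_degree]; omega
    obtain ⟨y, hy, hyne⟩ := Finset.exists_mem_ne hcard2 pz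
    rw [SimpleGraph.mem_neighborFinset] at hy
    have hdy : G.dist u y = G.dist u x + 1 := by
      rcases adj_dist_cases hT hy u with h' | h'
      · exact absurd (parent_unique hT u hy hpz (by omega) (by omega)) hyne
      · exact h'
    have hby := branch_succ hT huv hy hx hdy
    have hyF := ih y hby (by omega)
    refine LF.Forced.force y x hyF (hfree y hby) hy.symm ?_
    intro z hz hzx
    rcases adj_dist_cases hT hz u with h' | h'
    · exact absurd (parent_unique hT u hz hy.symm (by omega) (by omega)) hzx
    · have hbz := branch_succ hT huv hz hby h'
      exact ih z hbz (by omega)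

private lemma forcingSet [Fintype V] [DecidableRel G.Adj] (hT : G.IsTree) {ℓ : ℕ}
    (hℓ : 1 ≤ ℓ) {S : Set V} (hS : ∀ w, G.degree w ≤ ℓ → w ∈ S) :
    LF.IsLeakyForcingSet G ℓ S := by
  classical
  intro L hL x
  have hc := hT.isConnected
  by_cases hdeg : G.degree x ≤ ℓ
  · exact LF.Forced.init x (hS x hdeg)
  push_neg at hdeg
  have hfreeex : ∃ w ∈ G.neighborFinset x, ∀ z ∈ L, ¬ (G.dist x z = G.dist w z + 1) := by
    by_contra hcon
    push_neg at hcon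
    have hLfin : L.Finite := Set.toFinite L
    set f : V → V := fun w =>
      if h : ∃ z, z ∈ L ∧ G.dist x z = G.dist w z + 1 then h.choose else x with hfdef
    have hfP : ∀ w ∈ G.neighborFinset x, f w ∈ L ∧ G.dist x (f w) = G.dist w (f w) + 1 := by
      intro w hw
      obtain ⟨z, hz1, hz2⟩ := hcon w hw
      have hex : ∃ z, z ∈ L ∧ G.dist x z = G.dist w z + 1 := ⟨z, hz1, hz2⟩
      rw [hfdef]
      simp only [dif_pos hex]
      exact hex.choose_spec
    have hcard : (G.neighborFinset x).card ≤ hLfin.toFinset.card := by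
      apply Finset.card_le_card_of_injOn f
      · intro w hw
        rw [Finset.mem_coe, Set.Finite.mem_toFinset]
        exact (hfP w hw).1
      · intro w₁ hw₁ w₂ hw₂ hf
        rw [Finset.mem_coe] at hw₁ hw₂
        have m₁ := (hfP w₁ hw₁).2
        have m₂ := (hfP w₂ hw₂).2
        rw [hf] at m₁
        have a₁ : G.Adj x w₁ := by rwa [SimpleGraph.mem_neighborFinset] at hw₁
        have a₂ : G.Adj x w₂ := by rwa [SimpleGraph.mem_neighborFinset] at hw₂
        refine parent_unique hT (f w₂) a₁ a₂ ?_ ?_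
        · rw [@SimpleGraph.dist_comm _ G (f w₂) w₁, @SimpleGraph.dist_comm _ G (f w₂) x]; omega
        · rw [@SimpleGraph.dist_comm _ G (f w₂) w₂, @SimpleGraph.dist_comm _ G (f w₂) x]; omega
    rw [G.card_neighborFinset_eq_degree] at hcard
    rw [Set.ncard_eq_toFinset_card L hLfin] at hL
    omega
  obtain ⟨w₀, hw₀, hfree'⟩ := hfreeex
  rw [SimpleGraph.mem_neighborFinset] at hw₀
  have hfree : ∀ z, G.dist x z = G.dist w₀ z + 1 → z ∉ L := fun z hz hzL => hfree' z hzL hz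
  have hbr := branch_forced hT hℓ hS hw₀ hfree
  have hw₀br : G.dist x w₀ = G.dist w₀ w₀ + 1 := by
    rw [SimpleGraph.dist_self, dist_eq_one_iff_adj.mpr hw₀]
  refine LF.Forced.force w₀ x (hbr w₀ hw₀br) (hfree _ hw₀br) hw₀.symm ?_
  intro z hz hzx
  have hzbr : G.dist x z = G.dist w₀ z + 1 := by
    have h1 : G.dist w₀ z = 1 := dist_eq_one_iff_adj.mpr hz
    have h00 : G.dist w₀ w₀ = 0 := SimpleGraph.dist_self
    rcases adj_dist_cases hT hz x with h' | h'
    · exfalso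
      have hz0 : G.dist x z = 0 := by omega
      exact hzx ((hc.dist_eq_zero_iff).mp hz0).symm
    · omega
  exact hbr z hzbr

private lemma mem_of_forcing [Fintype V] [DecidableRel G.Adj] {ℓ : ℕ} {S : Set V}
    (hS : LF.IsLeakyForcingSet G ℓ S) {v : V} (hv : G.degree v ≤ ℓ) : v ∈ S := by
  have hL : (↑(G.neighborFinset v) : Set V).ncard ≤ ℓ := by
    rw [Set.ncard_coe_finset, G.card_neighborFinset_eq_degree]; exact hv
  have h := hS _ hL v
  cases h with
  | init _ hv => exact hv
  | force b w hb hbL hadj hall =>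
    exact absurd (by rw [Finset.mem_coe, SimpleGraph.mem_neighborFinset]; exact hadj.symm :
      b ∈ (↑(G.neighborFinset v) : Set V)) hbL

end TreeLemmas


theorem stmt6 {V : Type*} [Fintype V] (G : SimpleGraph V) [DecidableRel G.Adj]
    (hT : G.IsTree) (hn : 2 ≤ Fintype.card V) (ℓ : ℕ) (hℓ : 1 ≤ ℓ) :
    LF.leakyForcingNumber G ℓ =
      (Finset.univ.filter fun v => G.degree v ≤ ℓ).card := by
  classical
  set S₀ := Finset.univ.filter fun v => G.degree v ≤ ℓ with hS₀
  have hS₀mem : ∀ w, G.degree w ≤ ℓ → w ∈ (↑S₀ : Set V) := by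
    intro w hw
    simp [hS₀, hw]
  have hforce : LF.IsLeakyForcingSet G ℓ ↑S₀ := forcingSet hT hℓ hS₀mem
  have hdef : LF.leakyForcingNumber G ℓ =
      sInf {k | ∃ S : Finset V, S.card = k ∧ LF.IsLeakyForcingSet G ℓ ↑S} := rfl
  have hmem : S₀.card ∈ {k | ∃ S : Finset V, S.card = k ∧ LF.IsLeakyForcingSet G ℓ ↑S} :=
    ⟨S₀, rfl, hforce⟩
  have h1 : LF.leakyForcingNumber G ℓ ≤ S₀.card := by
    rw [hdef]; exact Nat.sInf_le hmem
  have h2 : S₀.card ≤ LF.leakyForcingNumber G ℓ := by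
    obtain ⟨S, hcard, hf⟩ := Nat.sInf_mem (⟨_, hmem⟩ :
      {k | ∃ S : Finset V, S.card = k ∧ LF.IsLeakyForcingSet G ℓ ↑S}.Nonempty)
    rw [hdef, ← hcard]
    apply Finset.card_le_card
    intro v hv
    rw [hS₀, Finset.mem_filter] at hv
    exact mem_of_forcing hf hv.2
  omega
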